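/- Let C be a real n×n matrix, a ∈ ℝ^n, and λ = (λ_1, …, λ_n) ∈ ℝ^n with each λ_k ≠ 0. Set C(λ) = diag(λ_1, …, λ_n) + C and P_C(λ) = det C(λ), and assume P_C(λ) ≠ 0. Then (C(λ)⁻¹ a, a) = (1/P_C(λ)) · (∏_{k=1}^n λ_k) · ∑_{r=1}^n ∑_{1 ≤ i_1 < … < i_r ≤ n} (λ_{i_1} ⋯ λ_{i_r})⁻¹ · (A(C_{i_1 … i_r}) a_{i_1 … i_r}, a_{i_1 … i_r}), where C_{i_1 … i_r} is the r×r principal submatrix of C on rows and columns i_1, …, i_r, a_{i_1 … i_r} = (a_{i_1}, …, a_{i_r}) ∈ ℝ^r, and A(C_{i_1 … i_r}) is the r×r matrix of first-order cofactors of C_{i_1 … i_r}, i.e. its (i,j) entry is (−1)^{i+j} times the determinant of C_{i_1 … i_r} with row i and column j deleted. -/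

import Mathlib

open Matrix Finset

private lemma det_piecewise_single' {n : ℕ} (S : Finset (Fin n)) (B : Matrix (Fin n) (Fin n) ℝ) :
    Matrix.det (Matrix.of (S.piecewise (fun i => (Pi.single i 1 : Fin n → ℝ)) (fun i => B i))) =
      (B.submatrix (Sᶜ.orderEmbOfFin rfl) (Sᶜ.orderEmbOfFin rfl)).det := by
  set M : Matrix (Fin n) (Fin n) ℝ :=
    Matrix.of (S.piecewise (fun i => (Pi.single i 1 : Fin n → ℝ)) (fun i => B i)) with hM
  set e : {x // x ∈ S} ⊕ {x // ¬ x ∈ S} ≃ Fin n := Equiv.sumCompl (· ∈ S) with he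
  set f1 : Fin S.card ≃ {x // x ∈ S} := (S.orderIsoOfFin rfl).toEquiv with hf1
  set f2 : Fin Sᶜ.card ≃ {x // ¬ x ∈ S} :=
    ((Sᶜ.orderIsoOfFin rfl).toEquiv.trans (Equiv.subtypeEquivRight (fun x => Finset.mem_compl)))
    with hf2
  set e' : Fin S.card ⊕ Fin Sᶜ.card ≃ Fin n := (Equiv.sumCongr f1 f2).trans e with he'
  have key : M.submatrix e' e' =
      Matrix.fromBlocks 1 0
        (Matrix.of fun i j => B (Sᶜ.orderEmbOfFin rfl i) (S.orderEmbOfFin rfl j))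
        (B.submatrix (Sᶜ.orderEmbOfFin rfl) (Sᶜ.orderEmbOfFin rfl)) := by
    have hv1 : ∀ i : Fin S.card, e' (Sum.inl i) = S.orderEmbOfFin rfl i := fun i => rfl
    have hv2 : ∀ i : Fin Sᶜ.card, e' (Sum.inr i) = Sᶜ.orderEmbOfFin rfl i := fun i => rfl
    have hmem1 : ∀ i : Fin S.card, (S.orderEmbOfFin rfl i : Fin n) ∈ S := fun i =>
      Finset.orderEmbOfFin_mem _ _ _
    have hmem2 : ∀ i : Fin Sᶜ.card, (Sᶜ.orderEmbOfFin rfl i : Fin n) ∉ S := fun i =>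
      Finset.mem_compl.mp (Finset.orderEmbOfFin_mem _ _ _)
    ext x y
    rcases x with i | i <;> rcases y with j | j <;>
      simp only [Matrix.submatrix_apply, hv1, hv2, hM, Matrix.of_apply,
        Finset.piecewise_eq_of_mem _ _ _ (hmem1 _),
        Finset.piecewise_eq_of_notMem _ _ _ (hmem2 _),
        Matrix.fromBlocks_apply₁₁, Matrix.fromBlocks_apply₁₂,
        Matrix.fromBlocks_apply₂₁, Matrix.fromBlocks_apply₂₂]
    · rw [Pi.single_apply]
      simp [Matrix.one_apply, EmbeddingLike.apply_eq_iff_eq, eq_comm]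
    · rw [Pi.single_apply, if_neg]
      · simp
      · intro h; exact hmem2 j (h ▸ hmem1 i)
  rw [← Matrix.det_submatrix_equiv_self e' M, key,
    Matrix.det_fromBlocks_zero₁₂, Matrix.det_one, one_mul]

private lemma det_diagonal_add' {n : ℕ} (l : Fin n → ℝ) (B : Matrix (Fin n) (Fin n) ℝ) :
    (Matrix.diagonal l + B).det =
      ∑ S : Finset (Fin n), (∏ i ∈ S, l i) *
        (B.submatrix (Sᶜ.orderEmbOfFin rfl) (Sᶜ.orderEmbOfFin rfl)).det := by
  set f := (Matrix.detRowAlternating : (Fin n → ℝ) [⋀^Fin n]→ₗ[ℝ] ℝ) with hf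
  have hrows : (Matrix.diagonal l + B) =
      Matrix.of ((fun i => l i • (Pi.single i 1 : Fin n → ℝ)) + fun i => B i) := by
    ext i j
    by_cases h : i = j <;> simp [Matrix.diagonal_apply, Pi.single_apply, h, eq_comm]
  have h1 : (Matrix.diagonal l + B).det =
      f ((fun i => l i • (Pi.single i 1 : Fin n → ℝ)) + fun i => B i) := by
    rw [hrows]; rfl
  rw [h1]
  rw [show f ((fun i => l i • (Pi.single i 1 : Fin n → ℝ)) + fun i => B i) =
    f.toMultilinearMap ((fun i => l i • (Pi.single i 1 : Fin n → ℝ)) + fun i => B i) from rfl,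
    f.toMultilinearMap.map_add_univ]
  refine Finset.sum_congr rfl fun S _ => ?_
  have hpw : S.piecewise (fun i => l i • (Pi.single i 1 : Fin n → ℝ)) (fun i => B i) =
      S.piecewise (fun i => l i • (S.piecewise (fun k => (Pi.single k 1 : Fin n → ℝ))
          (fun k => B k) i))
        (S.piecewise (fun k => (Pi.single k 1 : Fin n → ℝ)) (fun k => B k)) := by
    ext i j
    by_cases h : i ∈ S
    · simp [Finset.piecewise_eq_of_mem _ _ _ h]
    · simp [Finset.piecewise_eq_of_notMem _ _ _ h]
  have := f.toMultilinearMap.map_piecewise_smul l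
    (S.piecewise (fun k => (Pi.single k 1 : Fin n → ℝ)) (fun k => B k)) S
  rw [hpw, this, smul_eq_mul]
  congr 1
  exact det_piecewise_single' S B

private lemma det_add_vecMulVec' {n : ℕ} (M : Matrix (Fin n) (Fin n) ℝ) (u v : Fin n → ℝ) :
    (M + Matrix.vecMulVec u v).det = M.det + ∑ i, u i * (M.updateRow i v).det := by
  set f := (Matrix.detRowAlternating : (Fin n → ℝ) [⋀^Fin n]→ₗ[ℝ] ℝ) with hf
  have h1 : (M + Matrix.vecMulVec u v).det =
      f.toMultilinearMap ((fun i => u i • v) + fun i => M i) := by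
    congr 1
    ext i j
    simp [Matrix.vecMulVec_apply, mul_comm, add_comm]
  rw [h1, f.toMultilinearMap.map_add_univ]
  have hterm : ∀ S : Finset (Fin n),
      f.toMultilinearMap (S.piecewise (fun i => u i • v) (fun i => M i)) =
        (∏ i ∈ S, u i) * f.toMultilinearMap (S.piecewise (fun _ => v) (fun i => M i)) := by
    intro S
    have hpw : S.piecewise (fun i => u i • v) (fun i => M i) =
        S.piecewise (fun i => u i • (S.piecewise (fun _ => v) (fun k => M k) i))
          (S.piecewise (fun _ => v) (fun k => M k)) := by
      ext i j
      by_cases h : i ∈ S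
      · simp [Finset.piecewise_eq_of_mem _ _ _ h]
      · simp [Finset.piecewise_eq_of_notMem _ _ _ h]
    rw [hpw, f.toMultilinearMap.map_piecewise_smul, smul_eq_mul]
  have hzero : ∀ S : Finset (Fin n), 2 ≤ S.card →
      f.toMultilinearMap (S.piecewise (fun i => u i • v) (fun i => M i)) = 0 := by
    intro S hS
    obtain ⟨i, hi, j, hj, hij⟩ := Finset.one_lt_card.mp hS
    rw [hterm]
    have := f.map_eq_zero_of_eq (S.piecewise (fun _ => v) (fun i => M i))
      (by rw [Finset.piecewise_eq_of_mem _ _ _ hi, Finset.piecewise_eq_of_mem _ _ _ hj]) hij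
    rw [show f.toMultilinearMap (S.piecewise (fun _ => v) (fun i => M i)) =
      f (S.piecewise (fun _ => v) (fun i => M i)) from rfl, this, mul_zero]
  classical
  have hsub : (insert (∅ : Finset (Fin n)) (Finset.univ.image fun i : Fin n => {i})) ⊆
      (Finset.univ : Finset (Finset (Fin n))) := Finset.subset_univ _
  have hsum : ∑ S ∈ insert (∅ : Finset (Fin n)) (Finset.univ.image fun i : Fin n => {i}),
        f.toMultilinearMap (Finset.piecewise S (fun i => u i • v) (fun i => M i)) =
      ∑ S : Finset (Fin n),
        f.toMultilinearMap (S.piecewise (fun i => u i • v) (fun i => M i)) := by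
    refine Finset.sum_subset hsub ?_
    intro S _ hS
    apply hzero
    simp only [Finset.mem_insert, Finset.mem_image, Finset.mem_univ, true_and] at hS
    push_neg at hS
    obtain ⟨h0, h1'⟩ := hS
    rcases Nat.lt_or_ge S.card 2 with h | h
    · interval_cases h' : S.card
      · exact absurd (Finset.card_eq_zero.mp h') h0.ne_empty
      · obtain ⟨i, hi⟩ := Finset.card_eq_one.mp h'
        exact absurd hi.symm (h1' i).elim
    · exact h
  rw [← hsum]
  rw [Finset.sum_insert (by simp)]
  rw [Finset.sum_image (by intro i _ j _ h; exact Finset.singleton_injective h)]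
  congr 1
  refine Finset.sum_congr rfl fun i _ => ?_
  rw [hterm, Finset.prod_singleton]
  congr 1
  rw [Finset.piecewise_singleton]
  rfl

private lemma det_updateRow_eq' {n : ℕ} (M : Matrix (Fin n) (Fin n) ℝ) (v : Fin n → ℝ)
    (i : Fin n) : (M.updateRow i v).det = ((Matrix.adjugate M)ᵀ *ᵥ v) i := by
  rw [← Matrix.det_transpose, ← Matrix.updateCol_transpose, ← Matrix.cramer_apply,
    Matrix.cramer_eq_adjugate_mulVec, Matrix.adjugate_transpose]

private lemma adjT_quadform' {n : ℕ} (M : Matrix (Fin n) (Fin n) ℝ) (w : Fin n → ℝ) :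
    (((Matrix.adjugate M)ᵀ *ᵥ w) ⬝ᵥ w) = (M + Matrix.vecMulVec w w).det - M.det := by
  rw [det_add_vecMulVec']
  simp only [det_updateRow_eq']
  rw [dotProduct]
  ring_nf
  exact Finset.sum_congr rfl fun i _ => mul_comm _ _

private lemma transpose_quadform' {n : ℕ} (M : Matrix (Fin n) (Fin n) ℝ) (a : Fin n → ℝ) :
    (Mᵀ *ᵥ a) ⬝ᵥ a = (M *ᵥ a) ⬝ᵥ a := by
  rw [dotProduct_comm, dotProduct_mulVec, Matrix.vecMul_transpose,
    dotProduct_comm]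

private def qform {n : ℕ} (C : Matrix (Fin n) (Fin n) ℝ) (a : Fin n → ℝ)
    (S : Finset (Fin n)) : ℝ :=
  ((Matrix.adjugate (C.submatrix (S.orderEmbOfFin rfl) (S.orderEmbOfFin rfl)))ᵀ *ᵥ
      (fun i => a (S.orderEmbOfFin rfl i))) ⬝ᵥ (fun i => a (S.orderEmbOfFin rfl i))

private lemma qform_eq {n : ℕ} (C : Matrix (Fin n) (Fin n) ℝ) (a : Fin n → ℝ)
    (S : Finset (Fin n)) {m : ℕ} (h : S.card = m) :
    ((Matrix.adjugate (C.submatrix (S.orderEmbOfFin h) (S.orderEmbOfFin h)))ᵀ *ᵥ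
        (fun i => a (S.orderEmbOfFin h i))) ⬝ᵥ (fun i => a (S.orderEmbOfFin h i)) =
      qform C a S := by
  subst h; rfl

theorem inv_diagonal_add_quadratic_form_expansion {n : ℕ} (C : Matrix (Fin n) (Fin n) ℝ)
    (a : Fin n → ℝ) (l : Fin n → ℝ) (hl : ∀ k, l k ≠ 0)
    (hP : (Matrix.diagonal l + C).det ≠ 0) :
    ((Matrix.diagonal l + C)⁻¹ *ᵥ a) ⬝ᵥ a =
      (1 / (Matrix.diagonal l + C).det) * (∏ k, l k) *
        ∑ r ∈ Finset.range n, ∑ S : {s : Finset (Fin n) // s.card = r + 1},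
          (∏ i ∈ S.1, l i)⁻¹ *
            (((Matrix.of fun i j : Fin (r + 1) =>
                  (-1 : ℝ) ^ ((i : ℕ) + (j : ℕ)) *
                    (((C.submatrix (S.1.orderEmbOfFin S.2) (S.1.orderEmbOfFin S.2)).submatrix
                        i.succAbove j.succAbove).det)) *ᵥ
                fun i : Fin (r + 1) => a (S.1.orderEmbOfFin S.2 i)) ⬝ᵥ
              fun i : Fin (r + 1) => a (S.1.orderEmbOfFin S.2 i)) := by
  classical
  set M := Matrix.diagonal l + C with hMdef
  -- Step A: reduce LHS to determinant difference
  have hA : (M⁻¹ *ᵥ a) ⬝ᵥ a = (M.det)⁻¹ * ((M + Matrix.vecMulVec a a).det - M.det) := by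
    rw [Matrix.inv_def, Ring.inverse_eq_inv', Matrix.smul_mulVec, smul_dotProduct,
      smul_eq_mul]
    congr 1
    rw [← adjT_quadform', transpose_quadform']
  -- Step B: expand the determinant difference over principal minors
  have hB : (M + Matrix.vecMulVec a a).det - M.det
      = ∑ S : Finset (Fin n), (∏ i ∈ S, l i) * qform C a Sᶜ := by
    have h1 : M + Matrix.vecMulVec a a = Matrix.diagonal l + (C + Matrix.vecMulVec a a) := by
      rw [hMdef, add_assoc]
    rw [h1, det_diagonal_add' l (C + Matrix.vecMulVec a a), hMdef, det_diagonal_add' l C,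
      ← Finset.sum_sub_distrib]
    refine Finset.sum_congr rfl fun S _ => ?_
    rw [← mul_sub]
    congr 1
    have h2 : (C + Matrix.vecMulVec a a).submatrix (Sᶜ.orderEmbOfFin rfl) (Sᶜ.orderEmbOfFin rfl)
        = C.submatrix (Sᶜ.orderEmbOfFin rfl) (Sᶜ.orderEmbOfFin rfl) +
          Matrix.vecMulVec (fun i => a (Sᶜ.orderEmbOfFin rfl i))
            (fun i => a (Sᶜ.orderEmbOfFin rfl i)) := by
      ext i j; simp [Matrix.vecMulVec_apply]
    rw [h2]
    exact (adjT_quadform' _ _).symm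
  -- Step C: reindex by complement
  have hC : ∑ S : Finset (Fin n), (∏ i ∈ S, l i) * qform C a Sᶜ
      = ∑ S : Finset (Fin n), (∏ i ∈ Sᶜ, l i) * qform C a S :=
    Fintype.sum_bijective (fun S : Finset (Fin n) => Sᶜ) compl_involutive.bijective _ _
      (fun S => by rw [compl_compl])
  -- Step D: split by cardinality
  have hq0 : qform C a ∅ = 0 := by
    simp [qform, dotProduct]
    exact Finset.sum_eq_zero fun i _ => i.elim0
  have hD : ∑ S : Finset (Fin n), (∏ i ∈ Sᶜ, l i) * qform C a S
      = ∑ r ∈ Finset.range n, ∑ S ∈ Finset.powersetCard (r + 1) Finset.univ,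
          (∏ i ∈ Sᶜ, l i) * qform C a S := by
    have hdisj : (↑(Finset.range ((Finset.univ : Finset (Fin n)).card + 1)) :
        Set ℕ).PairwiseDisjoint
          (fun i => Finset.powersetCard i (Finset.univ : Finset (Fin n))) := by
      intro i _ j _ hij
      refine Finset.disjoint_left.mpr fun S hiS hjS => hij ?_
      rw [← (Finset.mem_powersetCard_univ).mp hiS, ← (Finset.mem_powersetCard_univ).mp hjS]
    rw [← Finset.powerset_univ, Finset.powerset_card_biUnion,
      Finset.sum_biUnion hdisj, Finset.card_univ, Fintype.card_fin,
      Finset.sum_range_succ']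
    simp [Finset.powersetCard_zero, hq0]
  -- Step E: per-cardinality sums as subtype sums
  have hE : ∀ r : ℕ, ∑ S ∈ Finset.powersetCard (r + 1) (Finset.univ : Finset (Fin n)),
        (∏ i ∈ Sᶜ, l i) * qform C a S
      = ∑ S : {s : Finset (Fin n) // s.card = r + 1}, (∏ i ∈ S.1ᶜ, l i) * qform C a S.1 :=
    fun r => Finset.sum_subtype _ (fun S => Finset.mem_powersetCard_univ) _
  -- Step F: identify each statement term with `qform`
  have hF : ∀ (r : ℕ) (S : {s : Finset (Fin n) // s.card = r + 1}),
      (((Matrix.of fun i j : Fin (r + 1) =>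
            (-1 : ℝ) ^ ((i : ℕ) + (j : ℕ)) *
              (((C.submatrix (S.1.orderEmbOfFin S.2) (S.1.orderEmbOfFin S.2)).submatrix
                  i.succAbove j.succAbove).det)) *ᵥ
          fun i : Fin (r + 1) => a (S.1.orderEmbOfFin S.2 i)) ⬝ᵥ
        fun i : Fin (r + 1) => a (S.1.orderEmbOfFin S.2 i)) = qform C a S.1 := by
    intro r S
    have hmat : (Matrix.of fun i j : Fin (r + 1) =>
          (-1 : ℝ) ^ ((i : ℕ) + (j : ℕ)) *
            (((C.submatrix (S.1.orderEmbOfFin S.2) (S.1.orderEmbOfFin S.2)).submatrix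
                i.succAbove j.succAbove).det))
        = (Matrix.adjugate (C.submatrix (S.1.orderEmbOfFin S.2) (S.1.orderEmbOfFin S.2)))ᵀ := by
      ext i j
      rw [Matrix.of_apply, Matrix.transpose_apply, Matrix.adjugate_fin_succ_eq_det_submatrix]
    rw [hmat]
    exact qform_eq C a S.1 S.2
  -- Combine
  rw [hA, hB, hC, hD]
  simp only [hE]
  simp only [hF]
  rw [one_div, mul_assoc]
  congr 1
  rw [Finset.mul_sum]
  refine Finset.sum_congr rfl fun r _ => ?_
  rw [Finset.mul_sum]
  refine Finset.sum_congr rfl fun S _ => ?_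
  rw [← Finset.prod_mul_prod_compl S.1 l]
  have hS0 : (∏ i ∈ S.1, l i) ≠ 0 := Finset.prod_ne_zero_iff.mpr fun i _ => hl i
  field_simp
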